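/- Let (Ω, 𝔉, ℙ) be a probability space, X, Y : Ω → ℝ measurable functions with X² and Y² integrable, c ∈ ℝ, and p ∈ [0,1]. If ℙ({ω : X(ω) = Y(ω)}) ≥ p, then max( E[(c − X)²], E[(c + Y)²] ) ≥ p · c². -/

import Mathlib

open MeasureTheory

/-- Core probabilistic step of Lemma 3: if `X = Y` with probability at least `p`,
then `max(E[(c − X)²], E[(c + Y)²]) ≥ p·c²`. -/
theorem stmt2 {Ω : Type*} [MeasurableSpace Ω] (μ : Measure Ω) [IsProbabilityMeasure μ]
    (X Y : Ω → ℝ) (hX : Measurable X) (hY : Measurable Y)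
    (hX2 : MemLp X 2 μ) (hY2 : MemLp Y 2 μ)
    (c p : ℝ) (hp0 : 0 ≤ p) (hp1 : p ≤ 1)
    (hprob : ENNReal.ofReal p ≤ μ {ω : Ω | X ω = Y ω}) :
    p * c ^ 2 ≤ max (∫ ω, (c - X ω) ^ 2 ∂μ) (∫ ω, (c + Y ω) ^ 2 ∂μ) := by
  set A : Set Ω := {ω : Ω | X ω = Y ω} with hAdef
  have hA : MeasurableSet A := measurableSet_eq_fun hX hY
  have h1 : Integrable (fun ω => (c - X ω) ^ 2) μ := by
    have := ((memLp_const c).sub hX2).integrable_sq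
    simpa [sq] using this
  have h2 : Integrable (fun ω => (c + Y ω) ^ 2) μ := by
    have := ((memLp_const c).add hY2).integrable_sq
    simpa [sq] using this
  have hμA : p ≤ (μ A).toReal := by
    have h1le : μ A ≤ 1 := prob_le_one
    have := ENNReal.toReal_mono (by simp) hprob
    simpa [ENNReal.toReal_ofReal hp0] using this
  -- lower bound for the sum of the two integrals
  have hsum : 2 * (p * c ^ 2) ≤
      (∫ ω, (c - X ω) ^ 2 ∂μ) + ∫ ω, (c + Y ω) ^ 2 ∂μ := by
    have hsetle : ∫ ω in A, (2 * c ^ 2 : ℝ) ∂μ ≤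
        ∫ ω in A, ((c - X ω) ^ 2 + (c + Y ω) ^ 2) ∂μ := by
      refine setIntegral_mono_on (integrable_const _).integrableOn
        (h1.add h2).integrableOn hA ?_
      intro ω hω
      have hxy : X ω = Y ω := hω
      rw [← hxy]; nlinarith [sq_nonneg (X ω)]
    have hconst : ∫ ω in A, (2 * c ^ 2 : ℝ) ∂μ = (μ A).toReal * (2 * c ^ 2) := by
      simp [Measure.restrict_apply_univ, Measure.real]
    have hwhole : ∫ ω in A, ((c - X ω) ^ 2 + (c + Y ω) ^ 2) ∂μ ≤
        ∫ ω, ((c - X ω) ^ 2 + (c + Y ω) ^ 2) ∂μ := by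
      refine setIntegral_le_integral (h1.add h2) ?_
      filter_upwards with ω
      positivity
    have hint : ∫ ω, ((c - X ω) ^ 2 + (c + Y ω) ^ 2) ∂μ =
        (∫ ω, (c - X ω) ^ 2 ∂μ) + ∫ ω, (c + Y ω) ^ 2 ∂μ := integral_add h1 h2
    have : p * (2 * c ^ 2) ≤ (μ A).toReal * (2 * c ^ 2) := by
      apply mul_le_mul_of_nonneg_right hμA (by positivity)
    nlinarith [hsetle, hwhole]
  rcases le_total (∫ ω, (c - X ω) ^ 2 ∂μ) (∫ ω, (c + Y ω) ^ 2 ∂μ) with h | h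
  · rw [max_eq_right h]; linarith
  · rw [max_eq_left h]; linarith
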